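/- Let T be a thick tree, let G ≤ Aut(T), and let k ≥ 2. Suppose that G is 1-type-distance-transitive, and that for each of the two types t of vertices (the parity classes) there exists a path (v₁, v₂, …, v_k) of pairwise distinct, consecutively adjacent vertices in T with v₁ of type t, such that the pointwise stabilizer of {v₁, …, v_k} in G acts transitively on S_{v₂}(v₁,1), the set of neighbours of v₁ other than v₂. Then G is k-type-distance-transitive. -/

import Mathlib

/-- The pointwise stabilizer of a set of vertices, inside the full symmetric group. -/
def ptStab {V : Type*} (s : Set V) : Subgroup (Equiv.Perm V) where
  carrier := {g | ∀ v ∈ s, g v = v}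
  one_mem' := by intro v _; rfl
  mul_mem' := by
    intro a b ha hb v hv
    simp only [Set.mem_setOf_eq] at *
    rw [Equiv.Perm.mul_apply, hb v hv, ha v hv]
  inv_mem' := by
    intro a ha v hv
    simp only [Set.mem_setOf_eq] at *
    calc a⁻¹ v = a⁻¹ (a v) := by rw [ha v hv]
      _ = v := a.symm_apply_apply v

/-- `G` consists of automorphisms of the graph `T`. -/
def PreservesAdj {V : Type*} (T : SimpleGraph V) (G : Subgroup (Equiv.Perm V)) : Prop :=
  ∀ g ∈ G, ∀ a b : V, T.Adj a b ↔ T.Adj (g a) (g b)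

/-- `G` is `k`-type-distance-transitive. -/
def TypeDistTrans {V : Type*} (T : SimpleGraph V) (G : Subgroup (Equiv.Perm V)) (k : ℕ) : Prop :=
  ∀ x y x' y' : V, T.dist x y = k → T.dist x' y' = k → Even (T.dist x x') →
    ∃ g ∈ G, g x = x' ∧ g y = y'

/-- The tree is thick: every vertex has at least three neighbours. -/
def Thick {V : Type*} (T : SimpleGraph V) : Prop :=
  ∀ v : V, ∃ a b c : V, T.Adj v a ∧ T.Adj v b ∧ T.Adj v c ∧ a ≠ b ∧ a ≠ c ∧ b ≠ c

section Aux

variable {V : Type*} {T : SimpleGraph V}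

/-- In an acyclic connected graph, any path realizes the distance between its endpoints. -/
private lemma dist_eq_length_of_isPath (hconn : T.Connected) (hacyc : T.IsAcyclic)
    {a b : V} (p : T.Walk a b) (hp : p.IsPath) : T.dist a b = p.length := by
  classical
  obtain ⟨q, hq⟩ := hconn.exists_walk_length_eq_dist a b
  have hbp : q.bypass.IsPath := q.bypass_isPath
  have h1 : q.bypass.length ≤ T.dist a b := hq ▸ q.length_bypass_le
  have h2 : T.dist a b ≤ q.bypass.length := SimpleGraph.dist_le _
  have hup : (⟨p, hp⟩ : T.Path a b) = ⟨q.bypass, hbp⟩ := hacyc.path_unique _ _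
  have hpq : p = q.bypass := by simpa using congrArg Subtype.val hup
  rw [hpq]; omega

/-- Build a walk out of a function with consecutive adjacencies. -/
private lemma walk_of_fn (v : ℕ → V) :
    ∀ n : ℕ, (∀ i, i < n → T.Adj (v i) (v (i + 1))) →
    ∃ p : T.Walk (v 0) (v n), p.length = n ∧ p.support = (List.range (n + 1)).map v := by
  intro n
  induction n with
  | zero => intro _; exact ⟨SimpleGraph.Walk.nil, rfl, by rw [List.range_succ]; simp⟩
  | succ n ih =>
    intro hadj
    obtain ⟨p, hl, hs⟩ := ih (fun i hi => hadj i (by omega))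
    refine ⟨p.concat (hadj n (by omega)), ?_, ?_⟩
    · rw [SimpleGraph.Walk.length_concat, hl]
    · simp [SimpleGraph.Walk.support_concat, hs, List.range_succ]

/-- An injective consecutive-adjacency sequence in a tree is a geodesic. -/
private lemma dist_path_eq (hconn : T.Connected) (hacyc : T.IsAcyclic) (v : ℕ → V) (n : ℕ)
    (hadj : ∀ i, i < n → T.Adj (v i) (v (i + 1)))
    (hinj : ∀ i j, i ≤ n → j ≤ n → v i = v j → i = j) :
    T.dist (v 0) (v n) = n := by
  obtain ⟨p, hl, hs⟩ := walk_of_fn v n hadj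
  have hnodup : p.support.Nodup := by
    rw [hs]
    refine List.Nodup.map_on ?_ List.nodup_range
    intro i hi j hj hij
    have hi' : i < n + 1 := List.mem_range.mp hi
    have hj' : j < n + 1 := List.mem_range.mp hj
    exact hinj i j (by omega) (by omega) hij
  have hpath : p.IsPath := (SimpleGraph.Walk.isPath_def p).mpr hnodup
  rw [dist_eq_length_of_isPath hconn hacyc p hpath, hl]

/-- Decompose a distance into a geodesic sequence of vertices. -/
private lemma exists_geodesic (hconn : T.Connected) {x y : V} {n : ℕ} (h : T.dist x y = n) :
    ∃ p : ℕ → V, p 0 = x ∧ p n = y ∧ (∀ i, i < n → T.Adj (p i) (p (i + 1))) ∧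
      (∀ i, i ≤ n → T.dist x (p i) = i ∧ T.dist (p i) y = n - i) := by
  obtain ⟨q, hq⟩ := hconn.exists_walk_length_eq_dist x y
  rw [h] at hq
  have hadj : ∀ i, i < n → T.Adj (q.getVert i) (q.getVert (i + 1)) := by
    intro i hi; exact q.adj_getVert_succ (by omega)
  have hy : q.getVert n = y := by rw [← hq]; exact q.getVert_length
  have hub : ∀ i, i ≤ n → T.dist x (q.getVert i) ≤ i := by
    intro i
    induction i with
    | zero => intro _; simp [q.getVert_zero]
    | succ i ih =>
      intro hi
      have h1 := ih (by omega)
      have h2 : T.dist (q.getVert i) (q.getVert (i + 1)) ≤ 1 :=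
        le_of_eq (SimpleGraph.dist_eq_one_iff_adj.mpr (hadj i (by omega)))
      have h3 := hconn.dist_triangle (u := x) (v := q.getVert i) (w := q.getVert (i + 1))
      omega
  have hub2 : ∀ m, m ≤ n → T.dist (q.getVert (n - m)) y ≤ m := by
    intro m
    induction m with
    | zero => intro _; simp [Nat.sub_zero, hy]
    | succ m ih =>
      intro hm
      have h1 := ih (by omega)
      have hlt : n - (m + 1) < n := by omega
      have hstep : n - (m + 1) + 1 = n - m := by omega
      have h2 : T.dist (q.getVert (n - (m + 1))) (q.getVert (n - m)) ≤ 1 := by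
        have := SimpleGraph.dist_eq_one_iff_adj.mpr (hadj (n - (m + 1)) hlt)
        rw [hstep] at this
        omega
      have h3 := hconn.dist_triangle (u := q.getVert (n - (m + 1))) (v := q.getVert (n - m))
        (w := y)
      omega
  refine ⟨q.getVert, q.getVert_zero, hy, hadj, ?_⟩
  intro i hi
  have h1 := hub i hi
  have h2 := hub2 (n - i) (by omega)
  rw [Nat.sub_sub_self hi] at h2
  have h3 := hconn.dist_triangle (u := x) (v := q.getVert i) (w := y)
  rw [h] at h3
  omega

/-- In a tree, adjacent vertices have distances to a root differing by exactly one. -/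
private lemma adj_dist_parity (hconn : T.Connected) (hacyc : T.IsAcyclic) (r : V) {a b : V}
    (hab : T.Adj a b) :
    T.dist r a + 1 = T.dist r b ∨ T.dist r b + 1 = T.dist r a := by
  classical
  have hab1 : T.dist a b = 1 := SimpleGraph.dist_eq_one_iff_adj.mpr hab
  have hba1 : T.dist b a = 1 := SimpleGraph.dist_eq_one_iff_adj.mpr hab.symm
  have hd1 : T.dist r b ≤ T.dist r a + 1 := by
    have := hconn.dist_triangle (u := r) (v := a) (w := b); omega
  have hd2 : T.dist r a ≤ T.dist r b + 1 := by
    have := hconn.dist_triangle (u := r) (v := b) (w := a); omega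
  have hne : T.dist r a ≠ T.dist r b := by
    intro heq
    obtain ⟨q, hq⟩ := hconn.exists_walk_length_eq_dist r a
    have hPpath : q.bypass.IsPath := q.bypass_isPath
    have hPlen : q.bypass.length = T.dist r a :=
      le_antisymm (hq ▸ q.length_bypass_le) (SimpleGraph.dist_le _)
    by_cases hb : b ∈ q.bypass.support
    · have hspec := q.bypass.take_spec hb
      have hlen : (q.bypass.takeUntil b hb).length + (q.bypass.dropUntil b hb).length
          = q.bypass.length := by
        rw [← SimpleGraph.Walk.length_append, hspec]
      have h5 : T.dist r b ≤ (q.bypass.takeUntil b hb).length := SimpleGraph.dist_le _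
      have h6 : (q.bypass.dropUntil b hb).length = 0 := by omega
      exact hab.ne (SimpleGraph.Walk.eq_of_length_eq_zero h6).symm
    · have hcons : (q.bypass.reverse.cons hab.symm).IsPath :=
        hPpath.reverse.cons (by rwa [SimpleGraph.Walk.support_reverse, List.mem_reverse])
      have hdb := dist_eq_length_of_isPath hconn hacyc _ hcons
      rw [SimpleGraph.Walk.length_cons, SimpleGraph.Walk.length_reverse, hPlen,
        SimpleGraph.dist_comm] at hdb
      omega
  omega

/-- Parity of walks relative to a root. -/
private lemma walk_parity (hconn : T.Connected) (hacyc : T.IsAcyclic) (r : V) {a b : V}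
    (p : T.Walk a b) : (T.dist r a + T.dist r b + p.length) % 2 = 0 := by
  induction p with
  | nil => simp only [SimpleGraph.Walk.length_nil]; omega
  | cons h q ih =>
    have := adj_dist_parity hconn hacyc r h
    rw [SimpleGraph.Walk.length_cons]
    omega

/-- Triangle parity in a tree. -/
private lemma dist_parity (hconn : T.Connected) (hacyc : T.IsAcyclic) (x y z : V) :
    (T.dist x y + T.dist x z + T.dist y z) % 2 = 0 := by
  obtain ⟨p, hp⟩ := hconn.exists_walk_length_eq_dist y z
  have := walk_parity hconn hacyc x p
  omega

/-- A permutation preserving adjacency (in both directions) preserves distance. -/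
private lemma dist_perm (hconn : T.Connected) (g : Equiv.Perm V)
    (h : ∀ a b : V, T.Adj a b ↔ T.Adj (g a) (g b)) (a b : V) :
    T.dist (g a) (g b) = T.dist a b := by
  have key : ∀ (g : Equiv.Perm V), (∀ a b : V, T.Adj a b → T.Adj (g a) (g b)) →
      ∀ a b : V, T.dist (g a) (g b) ≤ T.dist a b := by
    intro g hg a b
    obtain ⟨p, hp⟩ := hconn.exists_walk_length_eq_dist a b
    let f : T →g T := ⟨g, fun hab => hg _ _ hab⟩
    calc T.dist (g a) (g b) ≤ (p.map f).length := SimpleGraph.dist_le _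
    _ = p.length := SimpleGraph.Walk.length_map f p
    _ = _ := hp
  refine le_antisymm (key g (fun a b hab => (h a b).mp hab) a b) ?_
  have h2 : ∀ a b : V, T.Adj a b → T.Adj (g⁻¹ a) (g⁻¹ b) := by
    intro a b hab
    have := h (g⁻¹ a) (g⁻¹ b)
    simp only [Equiv.Perm.inv_def, Equiv.apply_symm_apply] at this
    exact this.mpr hab
  have := key g⁻¹ h2 (g a) (g b)
  simpa using this

end Aux

/-- If `G` is 1-type-distance-transitive on the thick tree `T`, `k ≥ 2`,
and for each of the two types there is a path `(v₁, …, v_k)` starting at a vertex of that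
type whose pointwise stabilizer in `G` acts transitively on the neighbours of `v₁` other
than `v₂`, then `G` is `k`-type-distance-transitive. -/
theorem k_type_distance_transitive_of_path_stabilizer
    {V : Type*} (T : SimpleGraph V) (hconn : T.Connected) (hacyc : T.IsAcyclic)
    (hthick : Thick T)
    (G : Subgroup (Equiv.Perm V)) (hG : PreservesAdj T G)
    (k : ℕ) (hk : 2 ≤ k) (h1 : TypeDistTrans T G 1)
    (hpath : ∀ u : V, ∃ v : ℕ → V,
      Even (T.dist u (v 0)) ∧
      (∀ i j, i < k → j < k → v i = v j → i = j) ∧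
      (∀ i, i + 1 < k → T.Adj (v i) (v (i + 1))) ∧
      (∀ w w' : V, T.Adj (v 0) w → T.Adj (v 0) w' → w ≠ v 1 → w' ≠ v 1 →
        ∃ g ∈ G, (∀ i < k, g (v i) = v i) ∧ g w = w')) :
    TypeDistTrans T G k := by
  have hdist : ∀ g ∈ G, ∀ a b : V, T.dist (g a) (g b) = T.dist a b :=
    fun g hg => dist_perm hconn g (hG g hg)
  suffices H : ∀ j, 1 ≤ j → j ≤ k → TypeDistTrans T G j from H k (by omega) le_rfl
  intro j hj
  induction j, hj using Nat.le_induction with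
  | base => exact fun _ => h1
  | succ j hj IH =>
    intro hjk
    have hTj : TypeDistTrans T G j := IH (by omega)
    intro x y x' y' hxy hx'y' heven
    obtain ⟨p, hp0, hpn, hpadj, hpd⟩ := exists_geodesic hconn hxy
    obtain ⟨q, hq0, hqn, hqadj, hqd⟩ := exists_geodesic hconn hx'y'
    obtain ⟨v, hveven, hvinj, hvadj, hvstab⟩ := hpath (p 1)
    have hv0j : T.dist (v 0) (v j) = j :=
      dist_path_eq hconn hacyc v j (fun i hi => hvadj i (by omega))
        (fun i i' hi hi' => hvinj i i' (by omega) (by omega))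
    -- dist (v 1) (v j) ≤ j - 1
    have hv1j : T.dist (v 1) (v j) ≤ j - 1 := by
      obtain ⟨w, hw, -⟩ := walk_of_fn (T := T) (fun i => v (i + 1)) (j - 1)
        (fun i hi => hvadj (i + 1) (by omega))
      have hle : T.dist (v 1) (v (j - 1 + 1)) ≤ j - 1 := by
        have := SimpleGraph.dist_le w
        rw [hw] at this
        exact this
      have hj1 : j - 1 + 1 = j := by omega
      rwa [hj1] at hle
    -- distances along geodesics
    have hd1 : T.dist (p 1) y = j := by have := (hpd 1 (by omega)).2; omega
    have hd1' : T.dist (q 1) y' = j := by have := (hqd 1 (by omega)).2; omega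
    have hdx1 : T.dist x (p 1) = 1 := (hpd 1 (by omega)).1
    have hdx1' : T.dist x' (q 1) = 1 := (hqd 1 (by omega)).1
    -- parity for the primed side
    have hpar1 : Even (T.dist (q 1) (v 0)) := by
      have A := dist_parity hconn hacyc x (p 1) (v 0)
      have B := dist_parity hconn hacyc x x' (v 0)
      have C := dist_parity hconn hacyc x' (q 1) (v 0)
      rw [Nat.even_iff] at heven hveven ⊢
      omega
    obtain ⟨g, hgG, hg1, hgy⟩ := hTj (p 1) y (v 0) (v j) hd1 hv0j hveven
    obtain ⟨g', hg'G, hg'1, hg'y⟩ := hTj (q 1) y' (v 0) (v j) hd1' hv0j hpar1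
    -- g x is a neighbour of v 0 distinct from v 1
    have haxp : T.Adj x (p 1) := by have := hpadj 0 (by omega); rwa [hp0] at this
    have haxq : T.Adj x' (q 1) := by have := hqadj 0 (by omega); rwa [hq0] at this
    have hA : T.Adj (v 0) (g x) := by
      have := (hG g hgG x (p 1)).mp haxp
      rw [hg1] at this
      exact this.symm
    have hA' : T.Adj (v 0) (g' x') := by
      have := (hG g' hg'G x' (q 1)).mp haxq
      rw [hg'1] at this
      exact this.symm
    have hgxd : T.dist (g x) (v j) = j + 1 := by
      have := hdist g hgG x y
      rw [hgy, hxy] at this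
      exact this
    have hg'xd : T.dist (g' x') (v j) = j + 1 := by
      have := hdist g' hg'G x' y'
      rw [hg'y, hx'y'] at this
      exact this
    have hgx_ne : g x ≠ v 1 := by
      intro hcontra
      rw [hcontra] at hgxd
      omega
    have hg'x_ne : g' x' ≠ v 1 := by
      intro hcontra
      rw [hcontra] at hg'xd
      omega
    obtain ⟨t, htG, htfix, htmap⟩ := hvstab (g x) (g' x') hA hA' hgx_ne hg'x_ne
    refine ⟨g'⁻¹ * t * g, G.mul_mem (G.mul_mem (G.inv_mem hg'G) htG) hgG, ?_, ?_⟩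
    · rw [Equiv.Perm.mul_apply, Equiv.Perm.mul_apply, htmap, Equiv.Perm.inv_def, Equiv.symm_apply_apply]
    · rw [Equiv.Perm.mul_apply, Equiv.Perm.mul_apply, hgy, htfix j (by omega), ← hg'y,
        Equiv.Perm.inv_def, Equiv.symm_apply_apply]
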